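/- (Theorem on the long regression under strong exogeneity.) Let Assumption 2 hold, assume positivity, and assume the covariance matrix of (D,A) is positive definite. Then Δ_long = Δ_dce^l + Δ_ind^l, where Δ_dce^l = Σ_{a∈𝒜} ω_dce^l(a)·(μ(1,a) − μ(0,a)) and Δ_ind^l = Σ_{a∈𝒜} ω_ind^l(a)·(μ(0,a) − μ(0,0)), and the weights satisfy Σ_{a∈𝒜} ω_dce^l(a) = 1 and Σ_{a∈𝒜} ω_ind^l(a) = 0. -/

import Mathlib

set_option linter.unusedSectionVars false
set_option maxHeartbeats 2000000


open MeasureTheory ProbabilityTheory BigOperators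

noncomputable section

variable {Ω : Type} [MeasurableSpace Ω] {K : ℕ}

/-- Expectation of a real-valued random variable. -/
def Exp (P : Measure Ω) (Z : Ω → ℝ) : ℝ := ∫ ω, Z ω ∂P

/-- Probability of an event, as a real number. -/
def Pr (P : Measure Ω) (s : Set Ω) : ℝ := (P s).toReal

/-- Conditional expectation given an event, defined as a ratio. -/
def CE (P : Measure Ω) (Z : Ω → ℝ) (s : Set Ω) : ℝ :=
  Exp P (fun ω => Z ω * s.indicator (fun _ => (1:ℝ)) ω) / Pr P s

/-- Covariance of two real-valued random variables. -/
def Cov (P : Measure Ω) (Z W : Ω → ℝ) : ℝ :=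
  Exp P (fun ω => Z ω * W ω) - Exp P Z * Exp P W

/-- The event {D = d, A = a}. -/
def evDA (D : Ω → ℕ) (A : Ω → Fin K → ℕ) (d : ℕ) (a : Fin K → ℕ) : Set Ω :=
  {ω | D ω = d ∧ A ω = a}

/-- The event {D = d}. -/
def evD (D : Ω → ℕ) (d : ℕ) : Set Ω := {ω | D ω = d}

/-- The event {A = a}. -/
def evA (A : Ω → Fin K → ℕ) (a : Fin K → ℕ) : Set Ω := {ω | A ω = a}

/-- π_d(a) = P(A = a | D = d). -/
def piP (P : Measure Ω) (D : Ω → ℕ) (A : Ω → Fin K → ℕ) (d : ℕ) (a : Fin K → ℕ) : ℝ :=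
  Pr P (evDA D A d a) / Pr P (evD D d)

/-- The observed outcome Y = Σ_{(d,a)} Y(d,a)·1{D=d, A=a}. -/
def Yobs (D : Ω → ℕ) (A : Ω → Fin K → ℕ) (𝒜 : Finset (Fin K → ℕ))
    (Ypot : ℕ → (Fin K → ℕ) → Ω → ℝ) : Ω → ℝ :=
  fun ω => ∑ d ∈ ({0, 1} : Finset ℕ), ∑ a ∈ 𝒜,
    Ypot d a ω * (if D ω = d ∧ A ω = a then (1:ℝ) else 0)

/-- μ(d,a) = E[Y(d,a)]. -/
def muP (P : Measure Ω) (Ypot : ℕ → (Fin K → ℕ) → Ω → ℝ) (d : ℕ) (a : Fin K → ℕ) : ℝ :=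
  Exp P (Ypot d a)

/-- The random vector (D, A) as a real-valued family indexed by Unit ⊕ Fin K. -/
def DAvec (D : Ω → ℕ) (A : Ω → Fin K → ℕ) : Unit ⊕ Fin K → Ω → ℝ :=
  Sum.elim (fun _ ω => (D ω : ℝ)) (fun j ω => (A ω j : ℝ))

/-- The (K+1)×(K+1) covariance matrix of (D, A). -/
def covDAmat (P : Measure Ω) (D : Ω → ℕ) (A : Ω → Fin K → ℕ) :
    Matrix (Unit ⊕ Fin K) (Unit ⊕ Fin K) ℝ :=
  Matrix.of fun i j => Cov P (DAvec D A i) (DAvec D A j)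

/-- The K×K covariance matrix Var(A). -/
def varAmat (P : Measure Ω) (A : Ω → Fin K → ℕ) : Matrix (Fin K) (Fin K) ℝ :=
  Matrix.of fun i j => Cov P (fun ω => (A ω i : ℝ)) (fun ω => (A ω j : ℝ))

/-- The row vector Cov(D, A). -/
def covDA (P : Measure Ω) (D : Ω → ℕ) (A : Ω → Fin K → ℕ) : Fin K → ℝ :=
  fun j => Cov P (fun ω => (D ω : ℝ)) (fun ω => (A ω j : ℝ))

/-- M = Cov(D,A) ⬝ Var(A)⁻¹. -/
def Mlong (P : Measure Ω) (D : Ω → ℕ) (A : Ω → Fin K → ℕ) : Fin K → ℝ :=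
  fun j => ∑ i, covDA P D A i * (varAmat P A)⁻¹ i j

/-- Var(D). -/
def varD (P : Measure Ω) (D : Ω → ℕ) : ℝ :=
  Cov P (fun ω => (D ω : ℝ)) (fun ω => (D ω : ℝ))

/-- denom = Var(D) − Cov(D,A)·Var(A)⁻¹·Cov(A,D). -/
def denomL (P : Measure Ω) (D : Ω → ℕ) (A : Ω → Fin K → ℕ) : ℝ :=
  varD P D - ∑ j, Mlong P D A j * covDA P D A j

/-- The long-regression weight ω_dce^l(a). -/
def wdceL (P : Measure Ω) (D : Ω → ℕ) (A : Ω → Fin K → ℕ) (a : Fin K → ℕ) : ℝ :=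
  piP P D A 1 a *
    (varD P D - Pr P (evD D 1) *
      ∑ j, Mlong P D A j * ((a j : ℝ) - Exp P (fun ω => (A ω j : ℝ)))) / denomL P D A

/-- The long-regression weight ω_ind^l(a). -/
def windL (P : Measure Ω) (D : Ω → ℕ) (A : Ω → Fin K → ℕ) (a : Fin K → ℕ) : ℝ :=
  (varD P D * (piP P D A 1 a - piP P D A 0 a) -
    Pr P (evA A a) * ∑ j, Mlong P D A j * ((a j : ℝ) - Exp P (fun ω => (A ω j : ℝ))))
  / denomL P D A

/-- The residual of the long regression of Y on (1, D, A). -/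
def residLong (D : Ω → ℕ) (A : Ω → Fin K → ℕ) (𝒜 : Finset (Fin K → ℕ))
    (Ypot : ℕ → (Fin K → ℕ) → Ω → ℝ) (Δ θ₀ : ℝ) (θ : Fin K → ℝ) : Ω → ℝ :=
  fun ω => Yobs D A 𝒜 Ypot ω - Δ * (D ω : ℝ) - θ₀ - ∑ j, θ j * (A ω j : ℝ)

/-- The random vector W = (A, A·D) as a real-valued family indexed by Fin K ⊕ Fin K. -/
def Wvec (D : Ω → ℕ) (A : Ω → Fin K → ℕ) : Fin K ⊕ Fin K → Ω → ℝ :=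
  Sum.elim (fun j ω => (A ω j : ℝ)) (fun j ω => (A ω j : ℝ) * (D ω : ℝ))

/-- The 2K×2K covariance matrix Var(W), W = (A, AD). -/
def varWmat (P : Measure Ω) (D : Ω → ℕ) (A : Ω → Fin K → ℕ) :
    Matrix (Fin K ⊕ Fin K) (Fin K ⊕ Fin K) ℝ :=
  Matrix.of fun u v => Cov P (Wvec D A u) (Wvec D A v)

/-- The row vector Cov(D, W). -/
def covDW (P : Measure Ω) (D : Ω → ℕ) (A : Ω → Fin K → ℕ) : Fin K ⊕ Fin K → ℝ :=
  fun u => Cov P (fun ω => (D ω : ℝ)) (Wvec D A u)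

/-- M = Cov(D,W) ⬝ Var(W)⁻¹ for the interaction regression. -/
def Minter (P : Measure Ω) (D : Ω → ℕ) (A : Ω → Fin K → ℕ) : Fin K ⊕ Fin K → ℝ :=
  fun v => ∑ u, covDW P D A u * (varWmat P D A)⁻¹ u v

/-- denom = Var(D) − M·Cov(W,D) for the interaction regression. -/
def denomI (P : Measure Ω) (D : Ω → ℕ) (A : Ω → Fin K → ℕ) : ℝ :=
  varD P D - ∑ v, Minter P D A v * covDW P D A v

/-- E[A_j | D = 1]. -/
def condA1 (P : Measure Ω) (D : Ω → ℕ) (A : Ω → Fin K → ℕ) (j : Fin K) : ℝ :=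
  CE P (fun ω => (A ω j : ℝ)) (evD D 1)

/-- The random vector (D, A, AD) as a real-valued family. -/
def DADvec (D : Ω → ℕ) (A : Ω → Fin K → ℕ) : Unit ⊕ (Fin K ⊕ Fin K) → Ω → ℝ :=
  Sum.elim (fun _ ω => (D ω : ℝ)) (Wvec D A)

/-- The (2K+1)×(2K+1) covariance matrix of (D, A, AD). -/
def covDADmat (P : Measure Ω) (D : Ω → ℕ) (A : Ω → Fin K → ℕ) :
    Matrix (Unit ⊕ (Fin K ⊕ Fin K)) (Unit ⊕ (Fin K ⊕ Fin K)) ℝ :=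
  Matrix.of fun i j => Cov P (DADvec D A i) (DADvec D A j)

/-- The interaction-regression weight ω_dce^i(a). -/
def wdceI (P : Measure Ω) (D : Ω → ℕ) (A : Ω → Fin K → ℕ) (a : Fin K → ℕ) : ℝ :=
  piP P D A 1 a *
    (varD P D
      - Pr P (evD D 1) *
          ∑ j, Minter P D A (Sum.inl j) * ((a j : ℝ) - Exp P (fun ω => (A ω j : ℝ)))
      - Pr P (evD D 1) *
          ∑ j, Minter P D A (Sum.inr j) * ((a j : ℝ) - Pr P (evD D 1) * condA1 P D A j))
  / denomI P D A

/-- The interaction-regression weight ω_ind^i(a). -/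
def windI (P : Measure Ω) (D : Ω → ℕ) (A : Ω → Fin K → ℕ) (a : Fin K → ℕ) : ℝ :=
  (varD P D * (piP P D A 1 a - piP P D A 0 a)
    - ∑ j, Minter P D A (Sum.inl j) * Pr P (evA A a) * ((a j : ℝ) - Exp P (fun ω => (A ω j : ℝ)))
    - Pr P (evD D 1) *
        ∑ j, Minter P D A (Sum.inr j) *
          (piP P D A 1 a * (a j : ℝ) - Pr P (evA A a) * condA1 P D A j))
  / denomI P D A

/-- The residual of the interaction regression of Y on (1, D, A, AD). -/
def residInter (D : Ω → ℕ) (A : Ω → Fin K → ℕ) (𝒜 : Finset (Fin K → ℕ))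
    (Ypot : ℕ → (Fin K → ℕ) → Ω → ℝ) (Δ θ₀ : ℝ) (θ lam : Fin K → ℝ) : Ω → ℝ :=
  fun ω => Yobs D A 𝒜 Ypot ω - Δ * (D ω : ℝ) - θ₀ - (∑ j, θ j * (A ω j : ℝ))
    - ∑ j, lam j * (A ω j : ℝ) * (D ω : ℝ)

/-- P(D = d | A = a). -/
def condDgivenA (P : Measure Ω) (D : Ω → ℕ) (A : Ω → Fin K → ℕ) (d : ℕ) (a : Fin K → ℕ) : ℝ :=
  Pr P (evDA D A d a) / Pr P (evA A a)

/-- The SFE weight ω_sfe(a). -/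
def wsfe (P : Measure Ω) (D : Ω → ℕ) (A : Ω → Fin K → ℕ) (𝒜 : Finset (Fin K → ℕ))
    (a : Fin K → ℕ) : ℝ :=
  condDgivenA P D A 1 a * condDgivenA P D A 0 a * Pr P (evA A a) /
    ∑ a' ∈ 𝒜, condDgivenA P D A 1 a' * condDgivenA P D A 0 a' * Pr P (evA A a')

/-- The residual of the SFE regression of Y on (D, {1{A=a}}). -/
def residSFE (D : Ω → ℕ) (A : Ω → Fin K → ℕ) (𝒜 : Finset (Fin K → ℕ))
    (Ypot : ℕ → (Fin K → ℕ) → Ω → ℝ) (Δ : ℝ) (θ : (Fin K → ℕ) → ℝ) : Ω → ℝ :=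
  fun ω => Yobs D A 𝒜 Ypot ω - Δ * (D ω : ℝ) -
    ∑ a ∈ 𝒜, θ a * (if A ω = a then (1:ℝ) else 0)

/-- The residual of the saturated regression of Y on ({1{A=a}}, {D·1{A=a}}). -/
def residSAT (D : Ω → ℕ) (A : Ω → Fin K → ℕ) (𝒜 : Finset (Fin K → ℕ))
    (Ypot : ℕ → (Fin K → ℕ) → Ω → ℝ) (γ Δsat : (Fin K → ℕ) → ℝ) : Ω → ℝ :=
  fun ω => Yobs D A 𝒜 Ypot ω - (∑ a ∈ 𝒜, γ a * (if A ω = a then (1:ℝ) else 0)) -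
    ∑ a ∈ 𝒜, Δsat a * (D ω : ℝ) * (if A ω = a then (1:ℝ) else 0)

section AuxLemmas

variable (P : Measure Ω) [IsProbabilityMeasure P]
variable (D : Ω → ℕ) (A : Ω → Fin K → ℕ) (𝒜 : Finset (Fin K → ℕ))
variable (Ypot : ℕ → (Fin K → ℕ) → Ω → ℝ)

lemma measurableSet_evDA (hD : Measurable D) (hA : Measurable A) (d : ℕ) (a : Fin K → ℕ) :
    MeasurableSet (evDA D A d a) := by
  have h : evDA D A d a = D ⁻¹' {d} ∩ A ⁻¹' {a} := by
    ext ω; simp [evDA]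
  rw [h]
  exact (hD (measurableSet_singleton d)).inter (hA (measurableSet_singleton a))

lemma indicator_eq (d : ℕ) (a : Fin K → ℕ) (f : Ω → ℝ) :
    (fun ω => f ω * (if D ω = d ∧ A ω = a then (1:ℝ) else 0)) = (evDA D A d a).indicator f := by
  funext ω
  by_cases h : D ω = d ∧ A ω = a <;> simp [evDA, Set.indicator, h]

lemma integrable_mul_ind (hD : Measurable D) (hA : Measurable A) (d : ℕ) (a : Fin K → ℕ)
    (f : Ω → ℝ) (hf : Integrable f P) :
    Integrable (fun ω => f ω * (if D ω = d ∧ A ω = a then (1:ℝ) else 0)) P := by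
  rw [indicator_eq]
  exact hf.indicator (measurableSet_evDA D A hD hA d a)

lemma exp_ind (hD : Measurable D) (hA : Measurable A) (d : ℕ) (a : Fin K → ℕ) :
    Exp P (fun ω => (if D ω = d ∧ A ω = a then (1:ℝ) else 0)) = Pr P (evDA D A d a) := by
  have h : (fun ω => (if D ω = d ∧ A ω = a then (1:ℝ) else 0))
      = (evDA D A d a).indicator (fun _ => (1:ℝ)) := by
    have := indicator_eq D A d a (fun _ => (1:ℝ))
    simpa using this
  rw [Exp, h, integral_indicator_const _ (measurableSet_evDA D A hD hA d a)]
  simp [Pr]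
  rfl

lemma exp_Ypot_mul_ind (hD : Measurable D) (hA : Measurable A) {d : ℕ} {a : Fin K → ℕ}
    (hInt : Integrable (Ypot d a) P)
    (hind : IndepFun (fun ω => (D ω, A ω)) (Ypot d a) P) (d' : ℕ) (a' : Fin K → ℕ) :
    Exp P (fun ω => Ypot d a ω * (if D ω = d' ∧ A ω = a' then (1:ℝ) else 0))
      = muP P Ypot d a * Pr P (evDA D A d' a') := by
  have hg : Measurable (fun x : ℕ × (Fin K → ℕ) => if x.1 = d' ∧ x.2 = a' then (1:ℝ) else 0) := by
    apply Measurable.ite _ measurable_const measurable_const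
    exact (measurable_fst (measurableSet_singleton d')).inter
      (measurable_snd (measurableSet_singleton a'))
  have hind2 : IndepFun (Ypot d a)
      (fun ω => if D ω = d' ∧ A ω = a' then (1:ℝ) else 0) P :=
    (hind.comp hg measurable_id).symm
  have hintInd : Integrable (fun ω => if D ω = d' ∧ A ω = a' then (1:ℝ) else 0) P := by
    have := integrable_mul_ind P D A hD hA d' a' (fun _ => (1:ℝ)) (integrable_const 1)
    simpa using this
  have := hind2.integral_mul_eq_mul_integral hInt.aestronglyMeasurable hintInd.aestronglyMeasurable
  have heq : (fun ω => Ypot d a ω * (if D ω = d' ∧ A ω = a' then (1:ℝ) else 0))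
      = (Ypot d a) * (fun ω => if D ω = d' ∧ A ω = a' then (1:ℝ) else 0) := rfl
  rw [Exp, heq, this, muP]
  rw [← Exp, ← Exp, exp_ind P D A hD hA]

lemma sum_ind_eval (hDbin : ∀ ω, D ω = 0 ∨ D ω = 1) (hAsupp : ∀ ω, A ω ∈ 𝒜)
    (ω : Ω) (h : ℕ → (Fin K → ℕ) → ℝ) :
    ∑ d ∈ ({0,1} : Finset ℕ), ∑ a ∈ 𝒜, h d a * (if D ω = d ∧ A ω = a then (1:ℝ) else 0)
      = h (D ω) (A ω) := by
  have hd : D ω ∈ ({0,1} : Finset ℕ) := by rcases hDbin ω with h0 | h1 <;> simp [*]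
  rw [Finset.sum_eq_single_of_mem (D ω) hd]
  · rw [Finset.sum_eq_single_of_mem (A ω) (hAsupp ω)]
    · simp
    · intro b _ hne
      simp [Ne.symm hne]
  · intro d _ hne
    apply Finset.sum_eq_zero
    intro a _
    simp [Ne.symm hne]

lemma expEval (hD : Measurable D) (hA : Measurable A)
    (hDbin : ∀ ω, D ω = 0 ∨ D ω = 1) (hAsupp : ∀ ω, A ω ∈ 𝒜)
    (hInt : ∀ d ∈ ({0, 1} : Finset ℕ), ∀ a ∈ 𝒜, Integrable (Ypot d a) P)
    (hIndep : ∀ d ∈ ({0, 1} : Finset ℕ), ∀ a ∈ 𝒜,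
      IndepFun (fun ω => (D ω, A ω)) (Ypot d a) P)
    (r s : ℕ → (Fin K → ℕ) → ℝ) (Z : Ω → ℝ)
    (hZ : ∀ ω, Z ω = Ypot (D ω) (A ω) ω * r (D ω) (A ω) + s (D ω) (A ω)) :
    Exp P Z = ∑ d ∈ ({0,1} : Finset ℕ), ∑ a ∈ 𝒜,
      (muP P Ypot d a * r d a + s d a) * Pr P (evDA D A d a) := by
  have hZ' : Z = fun ω => ∑ d ∈ ({0,1} : Finset ℕ), ∑ a ∈ 𝒜,
      (Ypot d a ω * r d a + s d a) * (if D ω = d ∧ A ω = a then (1:ℝ) else 0) := by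
    funext ω
    rw [hZ ω, sum_ind_eval D A 𝒜 hDbin hAsupp ω (fun d a => Ypot d a ω * r d a + s d a)]
  have hintda : ∀ d ∈ ({0,1} : Finset ℕ), ∀ a ∈ 𝒜,
      Integrable (fun ω => (Ypot d a ω * r d a + s d a) *
        (if D ω = d ∧ A ω = a then (1:ℝ) else 0)) P := fun d hd a ha =>
    integrable_mul_ind P D A hD hA d a _ (((hInt d hd a ha).mul_const _).add (integrable_const _))
  rw [Exp, hZ']
  rw [integral_finset_sum _ (fun d hd => integrable_finset_sum _ (fun a ha => hintda d hd a ha))]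
  refine Finset.sum_congr rfl (fun d hd => ?_)
  rw [integral_finset_sum _ (fun a ha => hintda d hd a ha)]
  refine Finset.sum_congr rfl (fun a ha => ?_)
  have hsplit : (fun ω => (Ypot d a ω * r d a + s d a) *
      (if D ω = d ∧ A ω = a then (1:ℝ) else 0))
      = fun ω => (Ypot d a ω * (if D ω = d ∧ A ω = a then (1:ℝ) else 0)) * r d a
        + s d a * (if D ω = d ∧ A ω = a then (1:ℝ) else 0) := by
    funext ω; ring
  have hI2 : Integrable (fun ω => if D ω = d ∧ A ω = a then (1:ℝ) else 0) P := by
    simpa using integrable_mul_ind P D A hD hA d a (fun _ => (1:ℝ)) (integrable_const 1)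
  rw [hsplit, integral_add ((integrable_mul_ind P D A hD hA d a _ (hInt d hd a ha)).mul_const _)
    (hI2.const_mul _), integral_mul_const, integral_const_mul]
  rw [← Exp, ← Exp, exp_Ypot_mul_ind P D A Ypot hD hA (hInt d hd a ha) (hIndep d hd a ha),
    exp_ind P D A hD hA]
  ring

end AuxLemmas


section MatrixLemmas

open Matrix

variable (P : Measure Ω) (D : Ω → ℕ) (A : Ω → Fin K → ℕ)

lemma Cov_comm (Z W : Ω → ℝ) : Cov P Z W = Cov P W Z := by
  unfold Cov
  rw [mul_comm (Exp P Z)]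
  congr 1
  unfold Exp
  congr 1
  funext ω
  ring

lemma varA_posdef (hPD : (covDAmat P D A).PosDef) : (varAmat P A).PosDef := by
  refine Matrix.PosDef.of_dotProduct_mulVec_pos ?_ ?_
  · show (varAmat P A)ᴴ = varAmat P A
    ext j k
    simp [Matrix.conjTranspose_apply, varAmat, Cov_comm P]
  · intro x hx
    have hy : (Sum.elim (fun _ => (0:ℝ)) x : Unit ⊕ Fin K → ℝ) ≠ 0 := by
      intro h
      apply hx
      funext j
      exact congrFun h (Sum.inr j)
    have h2 := hPD.dotProduct_mulVec_pos hy
    have heq : dotProduct (star (Sum.elim (fun _ => (0:ℝ)) x : Unit ⊕ Fin K → ℝ))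
          ((covDAmat P D A).mulVec (Sum.elim (fun _ => (0:ℝ)) x))
        = dotProduct (star x) ((varAmat P A).mulVec x) := by
      simp [dotProduct, Matrix.mulVec, Fintype.sum_sum_type, covDAmat, varAmat, DAvec]
    rw [heq] at h2
    exact h2

lemma Mlong_vecMul (hPD : (covDAmat P D A).PosDef) (k : Fin K) :
    ∑ j, Mlong P D A j * varAmat P A j k = covDA P D A k := by
  have hdet : IsUnit (varAmat P A).det := (varA_posdef P D A hPD).det_pos.ne'.isUnit
  have h : Matrix.vecMul (Matrix.vecMul (covDA P D A) (varAmat P A)⁻¹) (varAmat P A)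
      = covDA P D A := by
    rw [Matrix.vecMul_vecMul, Matrix.nonsing_inv_mul _ hdet, Matrix.vecMul_one]
  have h2 := congrFun h k
  simpa [Matrix.vecMul, dotProduct, Mlong] using h2

lemma denomL_pos (hPD : (covDAmat P D A).PosDef) : 0 < denomL P D A := by
  have hx : (Sum.elim (fun _ => (1:ℝ)) (fun j => -(Mlong P D A j)) : Unit ⊕ Fin K → ℝ) ≠ 0 := by
    intro h
    have h1 := congrFun h (Sum.inl ())
    simp at h1
  have h2 := hPD.dotProduct_mulVec_pos hx
  have hswap : ∑ j, Mlong P D A j * ∑ k, varAmat P A j k * Mlong P D A k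
      = ∑ k, covDA P D A k * Mlong P D A k := by
    calc ∑ j, Mlong P D A j * ∑ k, varAmat P A j k * Mlong P D A k
        = ∑ j, ∑ k, Mlong P D A j * varAmat P A j k * Mlong P D A k := by
          refine Finset.sum_congr rfl (fun j _ => ?_)
          rw [Finset.mul_sum]
          exact Finset.sum_congr rfl (fun k _ => by ring)
      _ = ∑ k, ∑ j, Mlong P D A j * varAmat P A j k * Mlong P D A k := Finset.sum_comm
      _ = ∑ k, covDA P D A k * Mlong P D A k := by
          refine Finset.sum_congr rfl (fun k _ => ?_)
          rw [← Finset.sum_mul, Mlong_vecMul P D A hPD k]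
  have heq : dotProduct
        (star (Sum.elim (fun _ => (1:ℝ)) (fun j => -(Mlong P D A j)) : Unit ⊕ Fin K → ℝ))
        ((covDAmat P D A).mulVec (Sum.elim (fun _ => (1:ℝ)) (fun j => -(Mlong P D A j))))
      = denomL P D A := by
    have hc : ∀ j, Cov P (fun ω => (A ω j : ℝ)) (fun ω => (D ω : ℝ)) = covDA P D A j :=
      fun j => Cov_comm P _ _
    simp only [dotProduct, Matrix.mulVec, Fintype.sum_sum_type, Sum.elim_inl,
      Sum.elim_inr, covDAmat, varAmat, DAvec, Matrix.of_apply, star_trivial, Pi.star_apply,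
      Finset.univ_unique, Finset.sum_singleton, denomL, varD]
    simp only [hc, show ∀ x, (Cov P (fun ω => ((D ω : ℕ):ℝ)) fun ω => ((A ω x : ℕ):ℝ)) = covDA P D A x from fun _ => rfl,
      show ∀ x k, (Cov P (fun ω => ((A ω x : ℕ):ℝ)) fun ω => ((A ω k : ℕ):ℝ)) = varAmat P A x k from fun _ _ => rfl]
    have e1 : ∀ x : Fin K,
        -Mlong P D A x * (covDA P D A x * 1 + ∑ k, varAmat P A x k * -Mlong P D A k)
        = -(Mlong P D A x * covDA P D A x)
          + Mlong P D A x * ∑ k, varAmat P A x k * Mlong P D A k := by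
      intro x
      have e2 : ∑ k, varAmat P A x k * -Mlong P D A k
          = -∑ k, varAmat P A x k * Mlong P D A k := by
        rw [← Finset.sum_neg_distrib]
        exact Finset.sum_congr rfl fun k _ => by ring
      rw [e2]; ring
    rw [Finset.sum_congr rfl (fun x _ => e1 x), Finset.sum_add_distrib,
      Finset.sum_neg_distrib, hswap]
    have e3 : ∑ x, covDA P D A x * -Mlong P D A x = -∑ x, Mlong P D A x * covDA P D A x := by
      rw [← Finset.sum_neg_distrib]
      exact Finset.sum_congr rfl fun k _ => by ring
    rw [e3]
    have e4 : ∑ k, covDA P D A k * Mlong P D A k = ∑ k, Mlong P D A k * covDA P D A k :=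
      Finset.sum_congr rfl fun k _ => mul_comm _ _
    rw [e4]
    ring
  rw [heq] at h2
  exact h2

end MatrixLemmas


/-- Theorem on the long regression under strong exogeneity:
Δ_long = Δ_dce^l + Δ_ind^l with weights summing to one and zero respectively. -/
theorem long_regression_under_strong_exogeneity
    (P : Measure Ω) [IsProbabilityMeasure P]
    (D : Ω → ℕ) (A : Ω → Fin K → ℕ) (𝒜 : Finset (Fin K → ℕ))
    (Ypot : ℕ → (Fin K → ℕ) → Ω → ℝ)
    (hD : Measurable D) (hA : Measurable A)
    (hDbin : ∀ ω, D ω = 0 ∨ D ω = 1)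
    (hAsupp : ∀ ω, A ω ∈ 𝒜) (h𝒜0 : (0 : Fin K → ℕ) ∈ 𝒜)
    (hInt : ∀ d ∈ ({0, 1} : Finset ℕ), ∀ a ∈ 𝒜, Integrable (Ypot d a) P)
    (hpos : ∀ d ∈ ({0, 1} : Finset ℕ), ∀ a ∈ 𝒜, 0 < Pr P (evDA D A d a))
    (hPD : (covDAmat P D A).PosDef)
    (hIndep : ∀ d ∈ ({0, 1} : Finset ℕ), ∀ a ∈ 𝒜,
      IndepFun (fun ω => (D ω, A ω)) (Ypot d a) P)
    (Δlong θ₀ : ℝ) (θ : Fin K → ℝ)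
    (hO1 : Exp P (residLong D A 𝒜 Ypot Δlong θ₀ θ) = 0)
    (hO2 : Exp P (fun ω => residLong D A 𝒜 Ypot Δlong θ₀ θ ω * (D ω : ℝ)) = 0)
    (hO3 : ∀ j : Fin K, Exp P (fun ω => residLong D A 𝒜 Ypot Δlong θ₀ θ ω * (A ω j : ℝ)) = 0)
    :
    Δlong
      = (∑ a ∈ 𝒜, wdceL P D A a * (muP P Ypot 1 a - muP P Ypot 0 a))
        + (∑ a ∈ 𝒜, windL P D A a * (muP P Ypot 0 a - muP P Ypot 0 0))
    ∧ (∑ a ∈ 𝒜, wdceL P D A a) = 1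
    ∧ (∑ a ∈ 𝒜, windL P D A a) = 0 := by
  classical
  have h0m : (0:ℕ) ∈ ({0,1}:Finset ℕ) := by simp
  have h1m : (1:ℕ) ∈ ({0,1}:Finset ℕ) := by simp
  have h01 : (0:ℕ) ≠ 1 := by norm_num
  obtain ⟨Q1, hQ1⟩ : ∃ f : (Fin K → ℕ) → ℝ, ∀ a, f a = Pr P (evDA D A 1 a) := ⟨_, fun _ => rfl⟩
  obtain ⟨Q0, hQ0⟩ : ∃ f : (Fin K → ℕ) → ℝ, ∀ a, f a = Pr P (evDA D A 0 a) := ⟨_, fun _ => rfl⟩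
  obtain ⟨m1, hm1⟩ : ∃ f : (Fin K → ℕ) → ℝ, ∀ a, f a = muP P Ypot 1 a := ⟨_, fun _ => rfl⟩
  obtain ⟨m0, hm0⟩ : ∃ f : (Fin K → ℕ) → ℝ, ∀ a, f a = muP P Ypot 0 a := ⟨_, fun _ => rfl⟩
  obtain ⟨M, hM⟩ : ∃ f : Fin K → ℝ, ∀ j, f j = Mlong P D A j := ⟨_, fun _ => rfl⟩
  obtain ⟨U, hU⟩ : ∃ f : Fin K → ℝ, ∀ j, f j = ∑ a ∈ 𝒜, ((a j : ℕ):ℝ) * Q1 a := ⟨_, fun _ => rfl⟩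
  obtain ⟨W, hW⟩ : ∃ f : Fin K → ℝ, ∀ j, f j = ∑ a ∈ 𝒜, ((a j : ℕ):ℝ) * Q0 a := ⟨_, fun _ => rfl⟩
  obtain ⟨E1A, hE1A⟩ : ∃ f : Fin K → Fin K → ℝ, ∀ j k,
      f j k = ∑ a ∈ 𝒜, (((a j : ℕ):ℝ) * ((a k : ℕ):ℝ)) * Q1 a := ⟨_, fun _ _ => rfl⟩
  obtain ⟨E0A, hE0A⟩ : ∃ f : Fin K → Fin K → ℝ, ∀ j k,
      f j k = ∑ a ∈ 𝒜, (((a j : ℕ):ℝ) * ((a k : ℕ):ℝ)) * Q0 a := ⟨_, fun _ _ => rfl⟩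
  -- expectation computations
  have hED : Exp P (fun ω => ((D ω : ℕ):ℝ)) = ∑ a ∈ 𝒜, Q1 a := by
    have h := expEval P D A 𝒜 Ypot hD hA hDbin hAsupp hInt hIndep (fun _ _ => 0)
      (fun d _ => (d:ℝ)) (fun ω => ((D ω : ℕ):ℝ)) (fun ω => by simp)
    rw [h, Finset.sum_pair h01]
    simp [← hQ1]
  have hEA : ∀ j, Exp P (fun ω => ((A ω j : ℕ):ℝ)) = U j + W j := by
    intro j
    have h := expEval P D A 𝒜 Ypot hD hA hDbin hAsupp hInt hIndep (fun _ _ => 0)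
      (fun _ a => ((a j : ℕ):ℝ)) (fun ω => ((A ω j : ℕ):ℝ)) (fun ω => by simp)
    rw [h, Finset.sum_pair h01, hU, hW]
    simp [← hQ1, ← hQ0]
    ring
  have hEDD : Exp P (fun ω => ((D ω : ℕ):ℝ) * ((D ω : ℕ):ℝ)) = ∑ a ∈ 𝒜, Q1 a := by
    have h := expEval P D A 𝒜 Ypot hD hA hDbin hAsupp hInt hIndep (fun _ _ => 0)
      (fun d _ => (d:ℝ) * (d:ℝ)) (fun ω => ((D ω : ℕ):ℝ) * ((D ω : ℕ):ℝ)) (fun ω => by simp)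
    rw [h, Finset.sum_pair h01]
    simp [← hQ1]
  have hEDA : ∀ j, Exp P (fun ω => ((D ω : ℕ):ℝ) * ((A ω j : ℕ):ℝ)) = U j := by
    intro j
    have h := expEval P D A 𝒜 Ypot hD hA hDbin hAsupp hInt hIndep (fun _ _ => 0)
      (fun d a => (d:ℝ) * ((a j : ℕ):ℝ)) (fun ω => ((D ω : ℕ):ℝ) * ((A ω j : ℕ):ℝ))
      (fun ω => by simp)
    rw [h, Finset.sum_pair h01, hU]
    simp [← hQ1]
  have hEAA : ∀ j k, Exp P (fun ω => ((A ω j : ℕ):ℝ) * ((A ω k : ℕ):ℝ))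
      = E0A j k + E1A j k := by
    intro j k
    have h := expEval P D A 𝒜 Ypot hD hA hDbin hAsupp hInt hIndep (fun _ _ => 0)
      (fun _ a => ((a j : ℕ):ℝ) * ((a k : ℕ):ℝ))
      (fun ω => ((A ω j : ℕ):ℝ) * ((A ω k : ℕ):ℝ)) (fun ω => by simp)
    rw [h, Finset.sum_pair h01, hE0A, hE1A]
    simp [← hQ1, ← hQ0]
  have hsum1 : (∑ a ∈ 𝒜, Q0 a) + (∑ a ∈ 𝒜, Q1 a) = 1 := by
    have h := expEval P D A 𝒜 Ypot hD hA hDbin hAsupp hInt hIndep (fun _ _ => 0)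
      (fun _ _ => (1:ℝ)) (fun _ => (1:ℝ)) (fun ω => by simp)
    have h1 : Exp P (fun _ => (1:ℝ)) = 1 := by
      rw [Exp]; simp
    rw [h1, Finset.sum_pair h01] at h
    simp only [← hQ1, ← hQ0] at h
    norm_num at h
    linarith [h]
  have hprD1 : Pr P (evD D 1) = ∑ a ∈ 𝒜, Q1 a := by
    have h := expEval P D A 𝒜 Ypot hD hA hDbin hAsupp hInt hIndep (fun _ _ => 0)
      (fun d _ => if d = 1 then (1:ℝ) else 0) (fun ω => if D ω = 1 then (1:ℝ) else 0)
      (fun ω => by simp)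
    have h2 : Exp P (fun ω => if D ω = 1 then (1:ℝ) else 0) = Pr P (evD D 1) := by
      have hind : (fun ω => if D ω = 1 then (1:ℝ) else 0)
          = (evD D 1).indicator (fun _ => (1:ℝ)) := by
        funext ω
        by_cases hh : D ω = 1 <;> simp [evD, Set.indicator, hh]
      have hmev : MeasurableSet (evD D 1) := hD (measurableSet_singleton 1)
      rw [Exp, hind, integral_indicator_const _ hmev]
      simp [Pr]
      rfl
    rw [h2] at h
    rw [h, Finset.sum_pair h01]
    simp [← hQ1]
  have hprD0 : Pr P (evD D 0) = ∑ a ∈ 𝒜, Q0 a := by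
    have h := expEval P D A 𝒜 Ypot hD hA hDbin hAsupp hInt hIndep (fun _ _ => 0)
      (fun d _ => if d = 0 then (1:ℝ) else 0) (fun ω => if D ω = 0 then (1:ℝ) else 0)
      (fun ω => by simp)
    have h2 : Exp P (fun ω => if D ω = 0 then (1:ℝ) else 0) = Pr P (evD D 0) := by
      have hind : (fun ω => if D ω = 0 then (1:ℝ) else 0)
          = (evD D 0).indicator (fun _ => (1:ℝ)) := by
        funext ω
        by_cases hh : D ω = 0 <;> simp [evD, Set.indicator, hh]
      have hmev : MeasurableSet (evD D 0) := hD (measurableSet_singleton 0)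
      rw [Exp, hind, integral_indicator_const _ hmev]
      simp [Pr]
      rfl
    rw [h2] at h
    rw [h, Finset.sum_pair h01]
    simp [← hQ0]
  have hprA : ∀ a0 ∈ 𝒜, Pr P (evA A a0) = Q0 a0 + Q1 a0 := by
    intro a0 ha0
    have h := expEval P D A 𝒜 Ypot hD hA hDbin hAsupp hInt hIndep (fun _ _ => 0)
      (fun _ a => if a = a0 then (1:ℝ) else 0) (fun ω => if A ω = a0 then (1:ℝ) else 0)
      (fun ω => by simp)
    have h2 : Exp P (fun ω => if A ω = a0 then (1:ℝ) else 0) = Pr P (evA A a0) := by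
      have hind : (fun ω => if A ω = a0 then (1:ℝ) else 0)
          = (evA A a0).indicator (fun _ => (1:ℝ)) := by
        funext ω
        by_cases hh : A ω = a0 <;> simp [evA, Set.indicator, hh]
      have hmev : MeasurableSet (evA A a0) := hA (measurableSet_singleton a0)
      rw [Exp, hind, integral_indicator_const _ hmev]
      simp [Pr]
      rfl
    rw [h2] at h
    rw [h, Finset.sum_pair h01]
    simp only [← hQ1, ← hQ0]
    simp [ite_mul, Finset.sum_ite_eq', ha0]
  -- p and positivity
  obtain ⟨p, hp⟩ : ∃ p : ℝ, p = ∑ a ∈ 𝒜, Q1 a := ⟨_, rfl⟩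
  have hQ1pos : ∀ a ∈ 𝒜, 0 < Q1 a := fun a ha => by rw [hQ1]; exact hpos 1 h1m a ha
  have hQ0pos : ∀ a ∈ 𝒜, 0 < Q0 a := fun a ha => by rw [hQ0]; exact hpos 0 h0m a ha
  have hppos : 0 < p := by
    rw [hp]; exact Finset.sum_pos (fun a ha => hQ1pos a ha) ⟨0, h𝒜0⟩
  have hq0sum : (∑ a ∈ 𝒜, Q0 a) = 1 - p := by rw [hp] at *; linarith [hsum1]
  have hplt : p < 1 := by
    have : 0 < ∑ a ∈ 𝒜, Q0 a := Finset.sum_pos (fun a ha => hQ0pos a ha) ⟨0, h𝒜0⟩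
    linarith [hq0sum]
  have hprD1' : Pr P (evD D 1) = p := by rw [hprD1, hp]
  have hprD0' : Pr P (evD D 0) = 1 - p := by rw [hprD0, hq0sum]
  -- orthogonality equations
  have hYobs : ∀ ω, Yobs D A 𝒜 Ypot ω = Ypot (D ω) (A ω) ω := by
    intro ω
    simp only [Yobs]
    exact sum_ind_eval D A 𝒜 hDbin hAsupp ω (fun d a => Ypot d a ω)
  have hOE1 := expEval P D A 𝒜 Ypot hD hA hDbin hAsupp hInt hIndep (fun _ _ => (1:ℝ))
    (fun d a => -(Δlong * (d:ℝ) + θ₀ + ∑ k, θ k * ((a k : ℕ):ℝ)))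
    (residLong D A 𝒜 Ypot Δlong θ₀ θ)
    (fun ω => by simp only [residLong, hYobs ω]; ring)
  rw [hO1, Finset.sum_pair h01] at hOE1
  simp only [← hQ1, ← hQ0, ← hm1, ← hm0, Nat.cast_zero, Nat.cast_one, mul_zero, mul_one,
    zero_add, add_zero] at hOE1
  have hOE2 := expEval P D A 𝒜 Ypot hD hA hDbin hAsupp hInt hIndep
    (fun d _ => (d:ℝ))
    (fun d a => -(Δlong * (d:ℝ) + θ₀ + ∑ k, θ k * ((a k : ℕ):ℝ)) * (d:ℝ))
    (fun ω => residLong D A 𝒜 Ypot Δlong θ₀ θ ω * ((D ω : ℕ):ℝ))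
    (fun ω => by simp only [residLong, hYobs ω]; ring)
  rw [hO2, Finset.sum_pair h01] at hOE2
  simp only [← hQ1, ← hQ0, ← hm1, ← hm0, Nat.cast_zero, Nat.cast_one, mul_zero, mul_one,
    zero_add, add_zero, zero_mul, neg_zero, Finset.sum_const_zero] at hOE2
  have hOE3 : ∀ j, (0:ℝ) = (∑ a ∈ 𝒜, (m0 a * ((a j : ℕ):ℝ)
        + -(θ₀ + ∑ k, θ k * ((a k : ℕ):ℝ)) * ((a j : ℕ):ℝ)) * Q0 a)
      + ∑ a ∈ 𝒜, (m1 a * ((a j : ℕ):ℝ)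
        + -(Δlong + θ₀ + ∑ k, θ k * ((a k : ℕ):ℝ)) * ((a j : ℕ):ℝ)) * Q1 a := by
    intro j
    have h := expEval P D A 𝒜 Ypot hD hA hDbin hAsupp hInt hIndep
      (fun _ a => ((a j : ℕ):ℝ))
      (fun d a => -(Δlong * (d:ℝ) + θ₀ + ∑ k, θ k * ((a k : ℕ):ℝ)) * ((a j : ℕ):ℝ))
      (fun ω => residLong D A 𝒜 Ypot Δlong θ₀ θ ω * ((A ω j : ℕ):ℝ))
      (fun ω => by simp only [residLong, hYobs ω]; ring)
    rw [hO3 j, Finset.sum_pair h01] at h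
    simp only [← hQ1, ← hQ0, ← hm1, ← hm0, Nat.cast_zero, Nat.cast_one, mul_zero, mul_one,
      zero_add, add_zero] at h
    exact h
  -- expansion helpers
  have hexp : ∀ (Q g : (Fin K → ℕ) → ℝ) (c0 : ℝ),
      ∑ a ∈ 𝒜, (g a + -(c0 + ∑ k, θ k * ((a k : ℕ):ℝ))) * Q a
        = (∑ a ∈ 𝒜, g a * Q a) - c0 * (∑ a ∈ 𝒜, Q a)
          - ∑ k, θ k * ∑ a ∈ 𝒜, ((a k : ℕ):ℝ) * Q a := by
    intro Q g c0
    have e1 : ∀ a ∈ 𝒜, (g a + -(c0 + ∑ k, θ k * ((a k : ℕ):ℝ))) * Q a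
        = g a * Q a - c0 * Q a - ∑ k, θ k * (((a k : ℕ):ℝ) * Q a) := by
      intro a _
      have e2 : (∑ k, θ k * ((a k : ℕ):ℝ)) * Q a = ∑ k, θ k * (((a k : ℕ):ℝ) * Q a) := by
        rw [Finset.sum_mul]
        exact Finset.sum_congr rfl fun k _ => by ring
      rw [← e2]; ring
    rw [Finset.sum_congr rfl e1, Finset.sum_sub_distrib, Finset.sum_sub_distrib,
      ← Finset.mul_sum]
    congr 1
    rw [Finset.sum_comm]
    exact Finset.sum_congr rfl fun k _ => (Finset.mul_sum _ _ _).symm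
  have hexpj : ∀ (j : Fin K) (Q g : (Fin K → ℕ) → ℝ) (c0 : ℝ),
      ∑ a ∈ 𝒜, (g a * ((a j : ℕ):ℝ)
          + -(c0 + ∑ k, θ k * ((a k : ℕ):ℝ)) * ((a j : ℕ):ℝ)) * Q a
        = (∑ a ∈ 𝒜, ((a j : ℕ):ℝ) * (g a * Q a)) - c0 * (∑ a ∈ 𝒜, ((a j : ℕ):ℝ) * Q a)
          - ∑ k, θ k * ∑ a ∈ 𝒜, (((a j : ℕ):ℝ) * ((a k : ℕ):ℝ)) * Q a := by
    intro j Q g c0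
    have e1 : ∀ a ∈ 𝒜, (g a * ((a j : ℕ):ℝ)
          + -(c0 + ∑ k, θ k * ((a k : ℕ):ℝ)) * ((a j : ℕ):ℝ)) * Q a
        = ((a j : ℕ):ℝ) * (g a * Q a) - c0 * (((a j : ℕ):ℝ) * Q a)
          - ∑ k, θ k * ((((a j : ℕ):ℝ) * ((a k : ℕ):ℝ)) * Q a) := by
      intro a _
      have e2 : (∑ k, θ k * ((a k : ℕ):ℝ)) * (((a j : ℕ):ℝ) * Q a)
          = ∑ k, θ k * ((((a j : ℕ):ℝ) * ((a k : ℕ):ℝ)) * Q a) := by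
        rw [Finset.sum_mul]
        exact Finset.sum_congr rfl fun k _ => by ring
      rw [← e2]; ring
    rw [Finset.sum_congr rfl e1, Finset.sum_sub_distrib, Finset.sum_sub_distrib,
      ← Finset.mul_sum]
    congr 1
    rw [Finset.sum_comm]
    exact Finset.sum_congr rfl fun k _ => (Finset.mul_sum _ _ _).symm
  -- solved moment equations
  have eqY1 : ∑ a ∈ 𝒜, m1 a * Q1 a
      = (Δlong + θ₀) * p + ∑ k, θ k * U k := by
    have h2 := hOE2
    rw [hexp Q1 m1 (Δlong + θ₀)] at h2
    rw [← hp] at h2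
    simp only [← hU] at h2
    linarith [h2]
  have eqY0 : ∑ a ∈ 𝒜, m0 a * Q0 a = θ₀ * (1 - p) + ∑ k, θ k * W k := by
    have h1 := hOE1
    rw [hexp Q1 m1 (Δlong + θ₀), hexp Q0 m0 θ₀] at h1
    rw [← hp, hq0sum] at h1
    simp only [← hU, ← hW] at h1
    have h2 := hOE2
    rw [hexp Q1 m1 (Δlong + θ₀)] at h2
    rw [← hp] at h2
    simp only [← hU] at h2
    linarith [h1, h2]
  have eqYA : ∀ j, (∑ a ∈ 𝒜, ((a j : ℕ):ℝ) * (m1 a * Q1 a))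
        + (∑ a ∈ 𝒜, ((a j : ℕ):ℝ) * (m0 a * Q0 a))
      = Δlong * U j + θ₀ * (U j + W j)
        + ((∑ k, θ k * E1A j k) + ∑ k, θ k * E0A j k) := by
    intro j
    have h := hOE3 j
    rw [hexpj j Q1 m1 (Δlong + θ₀), hexpj j Q0 m0 θ₀] at h
    simp only [← hU, ← hW, ← hE1A, ← hE0A] at h
    linarith [h]
  -- covariance translations
  have hcovDA : ∀ j, covDA P D A j = U j - p * (U j + W j) := by
    intro j
    simp only [covDA, Cov]
    rw [show (Exp P fun ω => ((D ω : ℕ):ℝ) * ((A ω j : ℕ):ℝ)) = U j from hEDA j,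
      hED, hEA j, ← hp]
  have hvarD : varD P D = p - p * p := by
    simp only [varD, Cov]
    rw [show (Exp P fun ω => ((D ω : ℕ):ℝ) * ((D ω : ℕ):ℝ)) = ∑ a ∈ 𝒜, Q1 a from hEDD,
      hED, ← hp]
  have hvarA : ∀ j k, varAmat P A j k
      = (E0A j k + E1A j k) - (U j + W j) * (U k + W k) := by
    intro j k
    simp only [varAmat, Matrix.of_apply, Cov]
    rw [show (Exp P fun ω => ((A ω j : ℕ):ℝ) * ((A ω k : ℕ):ℝ)) = E0A j k + E1A j k from
      hEAA j k, hEA j, hEA k]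
  have hMS : ∀ k, ∑ j, M j * ((E0A j k + E1A j k) - (U j + W j) * (U k + W k))
      = U k - p * (U k + W k) := by
    intro k
    have h := Mlong_vecMul P D A hPD k
    simp only [← hM, hvarA, hcovDA] at h
    exact h
  have hdnm : denomL P D A = (p - p * p) - ∑ j, M j * (U j - p * (U j + W j)) := by
    simp only [denomL]
    rw [hvarD]
    congr 1
    exact Finset.sum_congr rfl fun j _ => by rw [← hM, hcovDA]
  have hdpos : 0 < denomL P D A := denomL_pos P D A hPD
  have hdne : denomL P D A ≠ 0 := ne_of_gt hdpos
  -- S-sum helper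
  have hSsum : ∀ g : (Fin K → ℕ) → ℝ,
      ∑ a ∈ 𝒜, (∑ j, M j * (((a j : ℕ):ℝ) - (U j + W j))) * g a
        = ∑ j, M j * ((∑ a ∈ 𝒜, ((a j : ℕ):ℝ) * g a)
            - (U j + W j) * ∑ a ∈ 𝒜, g a) := by
    intro g
    calc ∑ a ∈ 𝒜, (∑ j, M j * (((a j : ℕ):ℝ) - (U j + W j))) * g a
        = ∑ a ∈ 𝒜, ∑ j, M j * ((((a j : ℕ):ℝ) - (U j + W j)) * g a) := by
          refine Finset.sum_congr rfl fun a _ => ?_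
          rw [Finset.sum_mul]
          exact Finset.sum_congr rfl fun j _ => by ring
      _ = ∑ j, ∑ a ∈ 𝒜, M j * ((((a j : ℕ):ℝ) - (U j + W j)) * g a) := Finset.sum_comm
      _ = ∑ j, M j * ((∑ a ∈ 𝒜, ((a j : ℕ):ℝ) * g a)
            - (U j + W j) * ∑ a ∈ 𝒜, g a) := by
          refine Finset.sum_congr rfl fun j _ => ?_
          rw [← Finset.mul_sum]
          congr 1
          rw [Finset.sum_congr rfl (fun x _ => sub_mul ((x j : ℕ):ℝ) (U j + W j) (g x)),
            Finset.sum_sub_distrib, ← Finset.mul_sum]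
  -- weight conversions
  have hSrw : ∀ a : Fin K → ℕ,
      (∑ j, Mlong P D A j * (((a j : ℕ):ℝ) - Exp P (fun ω => ((A ω j : ℕ):ℝ))))
        = ∑ j, M j * (((a j : ℕ):ℝ) - (U j + W j)) :=
    fun a => Finset.sum_congr rfl fun j _ => by rw [← hM, hEA j]
  have hw1 : ∀ a ∈ 𝒜, wdceL P D A a
      = Q1 a * ((1 - p) - ∑ j, M j * (((a j : ℕ):ℝ) - (U j + W j))) / denomL P D A := by
    intro a ha
    simp only [wdceL, piP]
    rw [hprD1', hvarD, hSrw a, ← hQ1]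
    field_simp
  have hw2 : ∀ a ∈ 𝒜, windL P D A a
      = ((1 - p) * Q1 a - p * Q0 a
          - (Q0 a + Q1 a) * ∑ j, M j * (((a j : ℕ):ℝ) - (U j + W j))) / denomL P D A := by
    intro a ha
    simp only [windL, piP]
    rw [hprD1', hprD0', hvarD, hSrw a, ← hQ1, ← hQ0, hprA a ha]
    rw [div_eq_div_iff hdne hdne]
    have hpne : p ≠ 0 := ne_of_gt hppos
    have hpne1 : (1:ℝ) - p ≠ 0 := by intro h; apply absurd hplt; rw [show p = 1 by linarith]; simp
    field_simp
  -- numerator sums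
  have hnumdce : ∑ a ∈ 𝒜, Q1 a * ((1 - p) - ∑ j, M j * (((a j : ℕ):ℝ) - (U j + W j)))
      = denomL P D A := by
    rw [Finset.sum_congr rfl (fun a _ => by ring :
      ∀ a ∈ 𝒜, Q1 a * ((1 - p) - ∑ j, M j * (((a j : ℕ):ℝ) - (U j + W j)))
        = (1 - p) * Q1 a - (∑ j, M j * (((a j : ℕ):ℝ) - (U j + W j))) * Q1 a)]
    rw [Finset.sum_sub_distrib, ← Finset.mul_sum, hSsum Q1, ← hp]
    rw [Finset.sum_congr rfl (fun j _ => by rw [← hU] :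
      ∀ j ∈ Finset.univ, M j * ((∑ a ∈ 𝒜, ((a j : ℕ):ℝ) * Q1 a) - (U j + W j) * p)
        = M j * (U j - (U j + W j) * p))]
    rw [hdnm]
    rw [Finset.sum_congr rfl (fun j _ => by ring :
      ∀ j ∈ Finset.univ, M j * (U j - (U j + W j) * p) = M j * (U j - p * (U j + W j)))]
    ring
  have hnum0 : ∑ a ∈ 𝒜, ((1 - p) * Q1 a - p * Q0 a
      - (Q0 a + Q1 a) * ∑ j, M j * (((a j : ℕ):ℝ) - (U j + W j))) = 0 := by
    rw [Finset.sum_sub_distrib, Finset.sum_sub_distrib, ← Finset.mul_sum, ← Finset.mul_sum,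
      ← hp, hq0sum]
    rw [Finset.sum_congr rfl (fun a _ => mul_comm (Q0 a + Q1 a)
      (∑ j, M j * (((a j : ℕ):ℝ) - (U j + W j))))]
    rw [hSsum (fun a => Q0 a + Q1 a)]
    have e1 : ∀ a ∈ 𝒜, ((a : Fin K → ℕ) : Fin K → ℕ) = a := fun a _ => rfl
    have e2 : ∀ j ∈ Finset.univ, M j * ((∑ a ∈ 𝒜, ((a j : ℕ):ℝ) * (Q0 a + Q1 a))
          - (U j + W j) * ∑ a ∈ 𝒜, (Q0 a + Q1 a)) = 0 := by
      intro j _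
      have e3 : ∑ a ∈ 𝒜, ((a j : ℕ):ℝ) * (Q0 a + Q1 a) = W j + U j := by
        rw [Finset.sum_congr rfl (fun a _ => mul_add ((a j : ℕ):ℝ) (Q0 a) (Q1 a)),
          Finset.sum_add_distrib, ← hU, ← hW]
      have e4 : ∑ a ∈ 𝒜, (Q0 a + Q1 a) = 1 := by
        rw [Finset.sum_add_distrib]; linarith [hsum1]
      rw [e3, e4]
      ring
    rw [Finset.sum_congr rfl e2]
    simp only [Finset.sum_const_zero]
    ring
  have C1 : ∑ a ∈ 𝒜, wdceL P D A a = 1 := by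
    rw [Finset.sum_congr rfl hw1, ← Finset.sum_div, hnumdce, div_self hdne]
  have C2 : ∑ a ∈ 𝒜, windL P D A a = 0 := by
    rw [Finset.sum_congr rfl hw2, ← Finset.sum_div, hnum0, zero_div]
  refine ⟨?_, C1, C2⟩
  -- convert the goal sums into raw q-coefficient form
  have hgw1 : ∀ a ∈ 𝒜, wdceL P D A a * (muP P Ypot 1 a - muP P Ypot 0 a)
      = (Q1 a * ((1 - p) - ∑ j, M j * (((a j : ℕ):ℝ) - (U j + W j))) * (m1 a - m0 a))
        / denomL P D A := by
    intro a ha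
    rw [hw1 a ha, ← hm1 a, ← hm0 a, div_mul_eq_mul_div]
  have hgw2 : ∀ a ∈ 𝒜, windL P D A a * (muP P Ypot 0 a - muP P Ypot 0 0)
      = (((1 - p) * Q1 a - p * Q0 a
            - (Q0 a + Q1 a) * ∑ j, M j * (((a j : ℕ):ℝ) - (U j + W j))) * (m0 a - m0 0))
        / denomL P D A := by
    intro a ha
    rw [hw2 a ha, ← hm0 a, ← hm0 0, div_mul_eq_mul_div]
  rw [Finset.sum_congr rfl hgw1, Finset.sum_congr rfl hgw2, ← Finset.sum_div, ← Finset.sum_div,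
    ← add_div, ← Finset.sum_add_distrib, eq_comm, div_eq_iff hdne]
  -- split per-a
  have hsplit : ∀ a ∈ 𝒜,
      (Q1 a * ((1 - p) - ∑ j, M j * (((a j : ℕ):ℝ) - (U j + W j))) * (m1 a - m0 a)
        + ((1 - p) * Q1 a - p * Q0 a
            - (Q0 a + Q1 a) * ∑ j, M j * (((a j : ℕ):ℝ) - (U j + W j))) * (m0 a - m0 0))
      = (1 - p) * (m1 a * Q1 a)
        - (∑ j, M j * (((a j : ℕ):ℝ) - (U j + W j))) * (m1 a * Q1 a)
        - (p * (m0 a * Q0 a)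
            + (∑ j, M j * (((a j : ℕ):ℝ) - (U j + W j))) * (m0 a * Q0 a))
        - ((1 - p) * Q1 a - p * Q0 a
            - (Q0 a + Q1 a) * ∑ j, M j * (((a j : ℕ):ℝ) - (U j + W j))) * m0 0 := by
    intro a _
    ring
  rw [Finset.sum_congr rfl hsplit, Finset.sum_sub_distrib, Finset.sum_sub_distrib,
    Finset.sum_sub_distrib, ← Finset.sum_mul, hnum0, zero_mul, Finset.sum_add_distrib,
    ← Finset.mul_sum, ← Finset.mul_sum, hSsum (fun a => m1 a * Q1 a),
    hSsum (fun a => m0 a * Q0 a)]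
  show _ = _
  -- combine the two j-sums
  have hcomb : (∑ j, M j * ((∑ a ∈ 𝒜, ((a j : ℕ):ℝ) * (m1 a * Q1 a))
          - (U j + W j) * ((Δlong + θ₀) * p + ∑ k, θ k * U k)))
      + (∑ j, M j * ((∑ a ∈ 𝒜, ((a j : ℕ):ℝ) * (m0 a * Q0 a))
          - (U j + W j) * (θ₀ * (1 - p) + ∑ k, θ k * W k)))
      = Δlong * ((p - p * p) - denomL P D A)
        + ((∑ k, θ k * U k) - p * (∑ k, θ k * U k) - p * ∑ k, θ k * W k) := by
    rw [← Finset.sum_add_distrib]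
    have hper : ∀ j ∈ (Finset.univ : Finset (Fin K)),
        (M j * ((∑ a ∈ 𝒜, ((a j : ℕ):ℝ) * (m1 a * Q1 a))
            - (U j + W j) * ((Δlong + θ₀) * p + ∑ k, θ k * U k))
          + M j * ((∑ a ∈ 𝒜, ((a j : ℕ):ℝ) * (m0 a * Q0 a))
            - (U j + W j) * (θ₀ * (1 - p) + ∑ k, θ k * W k)))
        = Δlong * (M j * (U j - p * (U j + W j)))
          + ∑ k, θ k * (M j * ((E0A j k + E1A j k) - (U j + W j) * (U k + W k))) := by
      intro j _
      have hyA := eqYA j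
      have hsump : ∑ k, θ k * (M j * ((E0A j k + E1A j k) - (U j + W j) * (U k + W k)))
          = M j * ((∑ k, θ k * E1A j k) + (∑ k, θ k * E0A j k)
              - (U j + W j) * ((∑ k, θ k * U k) + (∑ k, θ k * W k))) := by
        have e : ∀ k ∈ (Finset.univ : Finset (Fin K)),
            θ k * (M j * ((E0A j k + E1A j k) - (U j + W j) * (U k + W k)))
            = (M j * (θ k * E1A j k) + M j * (θ k * E0A j k))
              - (M j * ((U j + W j) * (θ k * U k)) + M j * ((U j + W j) * (θ k * W k))) := by
          intro k _
          ring
        rw [Finset.sum_congr rfl e, Finset.sum_sub_distrib, Finset.sum_add_distrib,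
          Finset.sum_add_distrib, ← Finset.mul_sum, ← Finset.mul_sum, ← Finset.mul_sum,
          ← Finset.mul_sum, ← Finset.mul_sum, ← Finset.mul_sum]
        ring
      rw [hsump]
      linear_combination M j * hyA
    rw [Finset.sum_congr rfl hper, Finset.sum_add_distrib]
    congr 1
    · rw [← Finset.mul_sum]
      congr 1
      rw [hdnm]
      ring
    · rw [Finset.sum_comm]
      have e2 : ∀ k ∈ (Finset.univ : Finset (Fin K)),
          (∑ j, θ k * (M j * ((E0A j k + E1A j k) - (U j + W j) * (U k + W k))))
          = θ k * U k - p * (θ k * U k) - p * (θ k * W k) := by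
        intro k _
        rw [← Finset.mul_sum, hMS k]
        ring
      rw [Finset.sum_congr rfl e2, Finset.sum_sub_distrib, Finset.sum_sub_distrib,
        ← Finset.mul_sum, ← Finset.mul_sum]
  rw [eqY1, eqY0]
  linear_combination -hcomb
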